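/- arXiv:2601.20593 — 7 statements merged into one kernel-verified Lean document; each statement's English description precedes it below -/
import Mathlib

section
/- Let (R, m, κ) be a discrete valuation ring containing a field k with fraction field K. Let φ = ⟨a₁, ..., aₙ⟩ be a diagonal quadratic form over k (all aᵢ ∈ k*). If φ is isotropic over K, then φ is isotropic over the residue field κ. -/
open IsLocalRing

private lemma aux_residue {R : Type*} [CommRing R] [IsLocalRing R] {n : ℕ}
    (A : Fin n → R) (r : Fin n → R) (hsum : ∑ i, A i * r i ^ 2 = 0)
    (j : Fin n) (hj : r j ∉ maximalIdeal R) :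
    ∃ z : Fin n → ResidueField R, z ≠ 0 ∧
      ∑ i, residue R (A i) * z i ^ 2 = 0 := by
  refine ⟨fun i => residue R (r i), ?_, ?_⟩
  · intro h
    apply hj
    have := congrFun h j
    simpa [Ideal.Quotient.eq_zero_iff_mem] using this
  · have : residue R (∑ i, A i * r i ^ 2) = 0 := by rw [hsum]; simp
    simpa [map_sum, map_mul, map_pow] using this

private lemma aux_ind {R : Type*} [CommRing R] [IsDomain R] [IsLocalRing R] {n : ℕ}
    (ϖ : R) (hϖ : Irreducible ϖ) (hmax : maximalIdeal R = Ideal.span {ϖ})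
    (A : Fin n → R) :
    ∀ (e : ℕ) (r : Fin n → R), (∑ i, A i * r i ^ 2 = 0) → ∀ j, Associated (r j) (ϖ ^ e) →
    ∃ z : Fin n → ResidueField R, z ≠ 0 ∧
      ∑ i, residue R (A i) * z i ^ 2 = 0 := by
  intro e
  induction e with
  | zero =>
    intro r hsum j hassoc
    refine aux_residue A r hsum j ?_
    have : IsUnit (r j) := by
      rw [pow_zero] at hassoc
      exact hassoc.symm.isUnit isUnit_one
    exact fun hmem => ((mem_maximalIdeal _).mp hmem) this
  | succ e ih =>
    intro r hsum j hassoc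
    by_cases hcase : ∃ i, r i ∉ maximalIdeal R
    · obtain ⟨i, hi⟩ := hcase
      exact aux_residue A r hsum i hi
    · push_neg at hcase
      have hdvd : ∀ i, ϖ ∣ r i := fun i => by
        have := hcase i
        rwa [hmax, Ideal.mem_span_singleton] at this
      choose s hs using hdvd
      have hsum' : ∑ i, A i * s i ^ 2 = 0 := by
        have h2 : ϖ ^ 2 * ∑ i, A i * s i ^ 2 = 0 := by
          rw [Finset.mul_sum]
          rw [← hsum]
          apply Finset.sum_congr rfl
          intro i _
          rw [hs i]; ring
        rcases mul_eq_zero.mp h2 with h | h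
        · exact absurd (pow_eq_zero_iff (by norm_num) |>.mp h) hϖ.ne_zero
        · exact h
      have hassoc' : Associated (s j) (ϖ ^ e) := by
        obtain ⟨u, hu⟩ := hassoc
        refine ⟨u, ?_⟩
        have : ϖ * (s j * u) = ϖ * ϖ ^ e := by
          rw [← mul_assoc, ← hs j, hu, pow_succ]; ring
        exact mul_left_cancel₀ hϖ.ne_zero this
      exact ih s hsum' j hassoc'

/-- If a diagonal quadratic form over `k ⊆ R` (R a DVR with fraction
field `K` and residue field `κ`) is isotropic over `K`, then it is isotropic over `κ`. -/
theorem stmt_0 (R : Type*) [CommRing R] [IsDomain R] [IsDiscreteValuationRing R]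
    (k : Type*) [Field k] [Algebra k R]
    (K : Type*) [Field K] [Algebra R K] [IsFractionRing R K]
    {n : ℕ} (a : Fin n → k) (ha : ∀ i, a i ≠ 0)
    (hK : ∃ y : Fin n → K, y ≠ 0 ∧
        ∑ i, algebraMap R K (algebraMap k R (a i)) * y i ^ 2 = 0) :
    ∃ z : Fin n → IsLocalRing.ResidueField R, z ≠ 0 ∧
      ∑ i, IsLocalRing.residue R (algebraMap k R (a i)) * z i ^ 2 = 0 := by
  obtain ⟨y, hy0, hysum⟩ := hK
  set A : Fin n → R := fun i => algebraMap k R (a i) with hA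
  -- clear denominators
  obtain ⟨b, hb⟩ := IsLocalization.exist_integer_multiples_of_finite
    (nonZeroDivisors R) y
  choose r hr using hb
  have hbK : (algebraMap R K) (b : R) ≠ 0 := by
    simp only [ne_eq]
    exact IsFractionRing.to_map_ne_zero_of_mem_nonZeroDivisors b.prop
  have hrK : ∀ i, algebraMap R K (r i) = algebraMap R K (b : R) * y i := by
    intro i
    rw [hr i, Algebra.smul_def]
  have hsumR : ∑ i, A i * r i ^ 2 = 0 := by
    apply IsFractionRing.injective R K
    rw [map_sum, map_zero]
    have : ∑ i, algebraMap R K (A i * r i ^ 2)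
        = (algebraMap R K (b : R)) ^ 2 * ∑ i, algebraMap R K (A i) * y i ^ 2 := by
      rw [Finset.mul_sum]
      apply Finset.sum_congr rfl
      intro i _
      rw [map_mul, map_pow, hrK i]; ring
    rw [this, hysum, mul_zero]
  obtain ⟨j, hyj⟩ := Function.ne_iff.mp hy0
  have hrj : r j ≠ 0 := by
    intro h
    apply hyj
    have := hrK j
    rw [h, map_zero] at this
    exact (mul_eq_zero.mp this.symm).resolve_left hbK
  obtain ⟨ϖ, hϖ⟩ := IsDiscreteValuationRing.exists_irreducible R
  obtain ⟨e, hassoc⟩ := IsDiscreteValuationRing.associated_pow_irreducible hrj hϖ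
  exact aux_ind ϖ hϖ ((IsDiscreteValuationRing.irreducible_iff_uniformizer ϖ).mp hϖ)
    A e r hsumR j hassoc
end

section
/- Let (R, m, κ) be a discrete valuation ring containing a field k, with fraction field K and valuation v. Let φ = ⟨a₁,...,aₙ⟩ be a diagonal quadratic form with coefficients aᵢ ∈ k* whose reduction to κ is anisotropic. Then for any elements y₁,...,yₙ ∈ K not all zero, v(a₁y₁² + ... + aₙyₙ²) = min{v(yᵢ²) : 1 ≤ i ≤ n}; in particular this valuation is even. -/
attribute [local instance] Classical.propDecidable

/-- If the reduction of the diagonal form `⟨a₁,…,aₙ⟩` to the residue field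
is anisotropic, then for `y₁,…,yₙ ∈ K` not all zero,
`v(∑ aᵢ yᵢ²) = min {v(yᵢ²)}` (the min taken in `WithTop ℤ`, zero entries contributing `⊤`),
and in particular this valuation is even. -/
theorem stmt_1 (R : Type*) [CommRing R] [IsDomain R] [IsDiscreteValuationRing R]
    (k : Type*) [Field k] [Algebra k R]
    (K : Type*) [Field K] [Algebra R K] [IsFractionRing R K]
    (v : K → ℤ)
    (hv0 : v 0 = 0)
    (hvmul : ∀ x y : K, x ≠ 0 → y ≠ 0 → v (x * y) = v x + v y)
    (hvadd : ∀ x y : K, x ≠ 0 → y ≠ 0 → x + y ≠ 0 → min (v x) (v y) ≤ v (x + y))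
    (hvint : ∀ x : K, x ≠ 0 → (0 ≤ v x ↔ ∃ r : R, algebraMap R K r = x))
    (hvres : ∀ r : R, r ≠ 0 →
      (0 < v (algebraMap R K r) ↔ IsLocalRing.residue R r = 0))
    {n : ℕ} (hn : 0 < n) (a : Fin n → k) (ha : ∀ i, a i ≠ 0)
    (haniso : ∀ z : Fin n → IsLocalRing.ResidueField R,
      ∑ i, IsLocalRing.residue R (algebraMap k R (a i)) * z i ^ 2 = 0 → z = 0)
    (y : Fin n → K) (hy : y ≠ 0) :
    (∑ i, algebraMap R K (algebraMap k R (a i)) * y i ^ 2) ≠ 0 ∧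
    ((v (∑ i, algebraMap R K (algebraMap k R (a i)) * y i ^ 2) : WithTop ℤ) =
      Finset.univ.inf fun i =>
        if y i = 0 then (⊤ : WithTop ℤ) else (v (y i ^ 2) : WithTop ℤ)) ∧
    Even (v (∑ i, algebraMap R K (algebraMap k R (a i)) * y i ^ 2)) := by
  classical
  obtain ⟨j, hjmem, hjmin⟩ := Finset.exists_min_image
    (Finset.univ.filter fun i => y i ≠ 0) (fun i => v (y i)) (by
      obtain ⟨i, hi⟩ := Function.ne_iff.mp hy
      exact ⟨i, Finset.mem_filter.mpr ⟨Finset.mem_univ i, hi⟩⟩)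
  have hyj : y j ≠ 0 := (Finset.mem_filter.mp hjmem).2
  have hjmin' : ∀ i, y i ≠ 0 → v (y j) ≤ v (y i) := fun i hi =>
    hjmin i (Finset.mem_filter.mpr ⟨Finset.mem_univ i, hi⟩)
  have hdiv : ∀ x z : K, x ≠ 0 → z ≠ 0 → v (x / z) = v x - v z := by
    intro x z hx hz
    have hxz : x / z ≠ 0 := div_ne_zero hx hz
    have h := hvmul (x / z) z hxz hz
    rw [div_mul_cancel₀ x hz] at h
    omega
  have hu : ∀ i, ∃ r : R, algebraMap R K r = y i / y j := by
    intro i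
    by_cases hi : y i = 0
    · exact ⟨0, by simp [hi]⟩
    · refine (hvint _ (div_ne_zero hi hyj)).mp ?_
      rw [hdiv _ _ hi hyj]
      have := hjmin' i hi
      omega
  choose r hr using hu
  have hrj : r j = 1 := by
    have h : algebraMap R K (r j) = algebraMap R K 1 := by
      rw [hr j, div_self hyj, map_one]
    exact IsFractionRing.injective R K h
  set A : Fin n → R := fun i => algebraMap k R (a i) with hA
  set T : R := ∑ i, A i * r i ^ 2 with hT
  have hresT : IsLocalRing.residue R T ≠ 0 := by
    intro h
    have hz := haniso (fun i => IsLocalRing.residue R (r i)) (by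
      rw [← h, hT, map_sum]
      simp [map_mul, map_pow, hA])
    have h1 := congrFun hz j
    rw [hrj, map_one] at h1
    exact one_ne_zero h1
  have hTne : T ≠ 0 := fun h => hresT (by rw [h, map_zero])
  set tK : K := algebraMap R K T with htK
  have htKne : tK ≠ 0 := fun h =>
    hTne (IsFractionRing.injective R K
      (show algebraMap R K T = algebraMap R K 0 by rw [map_zero, ← htK]; exact h))
  have hvT0 : v tK = 0 := by
    have h1 : 0 ≤ v tK := (hvint tK htKne).mpr ⟨T, rfl⟩
    have h2 : ¬ 0 < v tK := fun h => hresT ((hvres T hTne).mp h)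
    omega
  have hS : (∑ i, algebraMap R K (A i) * y i ^ 2) = y j ^ 2 * tK := by
    rw [htK, hT, map_sum, Finset.mul_sum]
    refine Finset.sum_congr rfl fun i _ => ?_
    rw [map_mul, map_pow, hr i]
    field_simp
  have hSne : y j ^ 2 * tK ≠ 0 := mul_ne_zero (pow_ne_zero 2 hyj) htKne
  have hSval : v (y j ^ 2 * tK) = v (y j ^ 2) := by
    rw [hvmul _ _ (pow_ne_zero 2 hyj) htKne, hvT0, add_zero]
  refine ⟨hS ▸ hSne, ?_, ?_⟩
  · rw [hS, hSval]
    apply le_antisymm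
    · apply Finset.le_inf
      intro i _
      by_cases hi : y i = 0
      · simp [hi]
      · rw [if_neg hi, WithTop.coe_le_coe, pow_two, pow_two,
          hvmul _ _ hyj hyj, hvmul _ _ hi hi]
        have := hjmin' i hi
        omega
    · have h := Finset.inf_le (f := fun i =>
        if y i = 0 then (⊤ : WithTop ℤ) else (v (y i ^ 2) : WithTop ℤ))
        (Finset.mem_univ j)
      simpa [hyj] using h
  · rw [hS, hSval, pow_two, hvmul _ _ hyj hyj]
    exact ⟨_, rfl⟩
end

section
/- Let (R, m, κ) be a DVR containing a field k with fraction field K and valuation v. Let φ = ⟨a₁,...,aₙ⟩ be a diagonal quadratic form over k whose reduction to κ is anisotropic. Let D(φ_K) ⊆ K* be the set of nonzero values represented by φ over K, and let ⟨D(φ_K)⟩ be the subgroup of K* it generates. If g ∈ ⟨D(φ_K)⟩ and v(g) ≥ 0, then the image ḡ of g in κ satisfies: ḡ = 0 or ḡ lies in the subgroup of κ* generated by the nonzero values represented by φ over κ. -/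
/-- If the reduction of `φ = ⟨a₁,…,aₙ⟩` to the residue field `κ` is
anisotropic, `g ∈ ⟨D(φ_K)⟩ ≤ Kˣ` and `v(g) ≥ 0`, then the reduction `ḡ ∈ κ` is `0`
or lies in the subgroup of `κˣ` generated by the nonzero values of `φ` over `κ`. -/
theorem stmt_2 (R : Type*) [CommRing R] [IsDomain R] [IsDiscreteValuationRing R]
    (k : Type*) [Field k] [Algebra k R]
    (K : Type*) [Field K] [Algebra R K] [IsFractionRing R K]
    (v : K → ℤ)
    (hv0 : v 0 = 0)
    (hvmul : ∀ x y : K, x ≠ 0 → y ≠ 0 → v (x * y) = v x + v y)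
    (hvadd : ∀ x y : K, x ≠ 0 → y ≠ 0 → x + y ≠ 0 → min (v x) (v y) ≤ v (x + y))
    (hvint : ∀ x : K, x ≠ 0 → (0 ≤ v x ↔ ∃ r : R, algebraMap R K r = x))
    (hvres : ∀ r : R, r ≠ 0 →
      (0 < v (algebraMap R K r) ↔ IsLocalRing.residue R r = 0))
    {n : ℕ} (a : Fin n → k) (ha : ∀ i, a i ≠ 0)
    (haniso : ∀ z : Fin n → IsLocalRing.ResidueField R,
      ∑ i, IsLocalRing.residue R (algebraMap k R (a i)) * z i ^ 2 = 0 → z = 0)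
    (g : Kˣ)
    (hg : g ∈ Subgroup.closure {d : Kˣ | ∃ y : Fin n → K,
        ∑ i, algebraMap R K (algebraMap k R (a i)) * y i ^ 2 = (d : K)})
    (hv : 0 ≤ v (g : K)) :
    ∀ r : R, algebraMap R K r = (g : K) →
      IsLocalRing.residue R r = 0 ∨
      ∃ u : (IsLocalRing.ResidueField R)ˣ,
        (u : IsLocalRing.ResidueField R) = IsLocalRing.residue R r ∧
        u ∈ Subgroup.closure {d : (IsLocalRing.ResidueField R)ˣ |
          ∃ z : Fin n → IsLocalRing.ResidueField R,
            ∑ i, IsLocalRing.residue R (algebraMap k R (a i)) * z i ^ 2 =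
              (d : IsLocalRing.ResidueField R)} := by
  classical
  intro r' hr'
  obtain ⟨ϖ, hϖ⟩ := IsDiscreteValuationRing.exists_irreducible R
  have inj : Function.Injective (algebraMap R K) := IsFractionRing.injective R K
  set π : K := algebraMap R K ϖ with hπdef
  have hϖ0 : ϖ ≠ 0 := hϖ.ne_zero
  have hπ0 : π ≠ 0 := by
    simp only [hπdef, ne_eq, map_eq_zero_iff _ inj]
    exact hϖ0
  have hresϖ : IsLocalRing.residue R ϖ = 0 :=
    (IsLocalRing.residue_eq_zero_iff ϖ).mpr hϖ.not_isUnit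
  -- factorization of nonzero elements of K
  have factor : ∀ x : K, ∃ (m : ℤ) (u : Rˣ), x ≠ 0 →
      x = π ^ m * algebraMap R K (u : R) := by
    intro x
    by_cases hx : x = 0
    · exact ⟨0, 1, fun h => absurd hx h⟩
    obtain ⟨p, q, hq, hpq⟩ := IsFractionRing.div_surjective (A := R) x
    have hq0 : q ≠ 0 := nonZeroDivisors.ne_zero hq
    have hp0 : p ≠ 0 := by
      rintro rfl
      simp at hpq
      exact hx hpq.symm
    obtain ⟨n₁, u₁, hu₁⟩ := IsDiscreteValuationRing.eq_unit_mul_pow_irreducible hp0 hϖ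
    obtain ⟨n₂, u₂, hu₂⟩ := IsDiscreteValuationRing.eq_unit_mul_pow_irreducible hq0 hϖ
    refine ⟨(n₁ : ℤ) - n₂, u₁ * u₂⁻¹, fun _ => ?_⟩
    have hq0K : algebraMap R K q ≠ 0 := fun h => hq0 (inj (by simpa using h))
    rw [← hpq, hu₁, hu₂, map_mul, map_mul, map_pow, map_pow, ← hπdef]
    rw [div_eq_iff (by rw [hπdef, ← map_pow, ← map_mul, ← hu₂]; exact hq0K)]
    have hu : algebraMap R K ((u₁ * u₂⁻¹ : Rˣ) : R) * algebraMap R K (u₂ : R)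
        = algebraMap R K (u₁ : R) := by
      rw [← map_mul]
      congr 1
      simp [Units.val_mul, mul_assoc]
    have hpow : π ^ ((n₁ : ℤ) - (n₂ : ℤ)) * π ^ (n₂ : ℕ) = π ^ (n₁ : ℕ) := by
      rw [← zpow_natCast π n₂, ← zpow_natCast π n₁, ← zpow_add₀ hπ0]
      congr 1
      ring
    calc algebraMap R K (u₁ : R) * π ^ n₁
        = (algebraMap R K ((u₁ * u₂⁻¹ : Rˣ) : R) * algebraMap R K (u₂ : R)) *
            (π ^ ((n₁ : ℤ) - (n₂ : ℤ)) * π ^ (n₂ : ℕ)) := by rw [hu, hpow]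
      _ = π ^ ((n₁ : ℤ) - (n₂ : ℤ)) * algebraMap R K ((u₁ * u₂⁻¹ : Rˣ) : R) *
            (algebraMap R K (u₂ : R) * π ^ n₂) := by ring
  -- the key invariant
  have key : ∃ (m : ℤ) (u : Rˣ), (g : K) = π ^ m * algebraMap R K (u : R) ∧
      Units.map (IsLocalRing.residue R).toMonoidHom u ∈
        Subgroup.closure {d : (IsLocalRing.ResidueField R)ˣ |
          ∃ z : Fin n → IsLocalRing.ResidueField R,
            ∑ i, IsLocalRing.residue R (algebraMap k R (a i)) * z i ^ 2 =
              (d : IsLocalRing.ResidueField R)} := by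
    clear hr' hv
    induction hg using Subgroup.closure_induction with
    | mem d hd =>
      obtain ⟨y, hy⟩ := hd
      -- not all y i are zero
      have hS : (Finset.univ.filter (fun i => y i ≠ 0)).Nonempty := by
        by_contra h
        rw [Finset.not_nonempty_iff_eq_empty, Finset.filter_eq_empty_iff] at h
        have : (d : K) = 0 := by
          rw [← hy]
          apply Finset.sum_eq_zero
          intro i _
          have := h (Finset.mem_univ i)
          simp only [ne_eq, not_not] at this
          simp [this]
        exact d.ne_zero this
      choose m u hmu using fun i => factor (y i)
      set S := Finset.univ.filter (fun i => y i ≠ 0) with hSdef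
      set M : ℤ := (S.image m).min' (hS.image m) with hMdef
      obtain ⟨i₀, hi₀S, hi₀⟩ := Finset.mem_image.mp ((S.image m).min'_mem (hS.image m))
      have hMle : ∀ i ∈ S, M ≤ m i := fun i hi =>
        (S.image m).min'_le (m i) (Finset.mem_image_of_mem m hi)
      set w : Fin n → R := fun i =>
        if y i = 0 then 0 else ϖ ^ (m i - M).toNat * (u i : R) with hwdef
      set s : R := ∑ i, algebraMap k R (a i) * w i ^ 2 with hsdef
      have claim1 : (d : K) = π ^ (2 * M) * algebraMap R K s := by
        rw [← hy, hsdef]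
        simp only [map_sum, Finset.mul_sum]
        apply Finset.sum_congr rfl
        intro i _
        by_cases hyi : y i = 0
        · simp [hyi, hwdef]
        · have hiS : i ∈ S := by simp [hSdef, hyi]
          have ht : ((m i - M).toNat : ℤ) = m i - M := Int.toNat_of_nonneg
            (sub_nonneg.mpr (hMle i hiS))
          have hw : w i = ϖ ^ (m i - M).toNat * (u i : R) := by simp [hwdef, hyi]
          rw [hw, hmu i hyi]
          simp only [map_pow, map_mul, ← hπdef]
          have hpows : π ^ (2 * M) * (π ^ (m i - M).toNat) ^ 2 = (π ^ m i) ^ 2 := by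
            rw [pow_two, pow_two, ← zpow_natCast π (m i - M).toNat, ht,
              ← zpow_add₀ hπ0, ← zpow_add₀ hπ0, ← zpow_add₀ hπ0]
            congr 1
            ring
          calc algebraMap R K (algebraMap k R (a i)) * (π ^ m i * algebraMap R K (u i : R)) ^ 2
              = π ^ (2 * M) * (algebraMap R K (algebraMap k R (a i)) *
                  ((π ^ (m i - M).toNat) ^ 2 * algebraMap R K (u i : R) ^ 2)) := by
                rw [mul_pow, ← hpows]; ring
            _ = π ^ (2 * M) * (algebraMap R K (algebraMap k R (a i)) *
                  (π ^ (m i - M).toNat * algebraMap R K (u i : R)) ^ 2) := by ring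
      -- residue of s is nonzero
      set z : Fin n → IsLocalRing.ResidueField R :=
        fun i => IsLocalRing.residue R (w i) with hzdef
      have hress : IsLocalRing.residue R s =
          ∑ i, IsLocalRing.residue R (algebraMap k R (a i)) * z i ^ 2 := by
        rw [hsdef, map_sum]
        apply Finset.sum_congr rfl
        intro i _
        rw [map_mul, map_pow]
      have hzi₀ : z i₀ ≠ 0 := by
        have hyi₀ : y i₀ ≠ 0 := by
          have := hi₀S
          simp only [hSdef, Finset.mem_filter] at this
          exact this.2
        have hw : w i₀ = (u i₀ : R) := by
          simp [hwdef, hyi₀, hi₀, ← hMdef]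
        simp only [hzdef, hw]
        exact ((u i₀).isUnit.map (IsLocalRing.residue R)).ne_zero
      have hsres0 : IsLocalRing.residue R s ≠ 0 := by
        intro h0
        rw [hress] at h0
        have := haniso z h0
        exact hzi₀ (by rw [this]; rfl)
      have hsu : IsUnit s := (IsLocalRing.residue_ne_zero_iff_isUnit s).mp hsres0
      refine ⟨2 * M, hsu.unit, ?_, ?_⟩
      · rw [claim1, hsu.unit_spec]
      · apply Subgroup.subset_closure
        refine ⟨z, ?_⟩
        rw [← hress]
        simp only [Units.coe_map, MonoidHom.coe_coe, RingHom.toMonoidHom_eq_coe,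
          IsUnit.unit_spec]
    | one =>
      refine ⟨0, 1, by simp, ?_⟩
      rw [map_one]
      exact Subgroup.one_mem _
    | mul x y hx hy ihx ihy =>
      obtain ⟨m₁, u₁, he₁, hc₁⟩ := ihx
      obtain ⟨m₂, u₂, he₂, hc₂⟩ := ihy
      refine ⟨m₁ + m₂, u₁ * u₂, ?_, ?_⟩
      · rw [Units.val_mul, he₁, he₂, Units.val_mul, map_mul, zpow_add₀ hπ0]
        ring
      · rw [map_mul]
        exact Subgroup.mul_mem _ hc₁ hc₂
    | inv x hx ihx =>
      obtain ⟨m, u, he, hc⟩ := ihx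
      refine ⟨-m, u⁻¹, ?_, ?_⟩
      · have hinv : algebraMap R K ((u⁻¹ : Rˣ) : R) = (algebraMap R K (u : R))⁻¹ := by
          apply eq_inv_of_mul_eq_one_left
          rw [← map_mul]
          simp
        rw [Units.val_inv_eq_inv_val, he, hinv, zpow_neg, mul_inv]
      · rw [map_inv]
        exact Subgroup.inv_mem _ hc
  obtain ⟨m, u, he, hc⟩ := key
  rcases lt_trichotomy m 0 with hm | hm | hm
  · exfalso
    have ht : ((-m).toNat : ℤ) = -m := Int.toNat_of_nonneg (by omega)
    have : algebraMap R K (r' * ϖ ^ (-m).toNat) = algebraMap R K (u : R) := by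
      rw [map_mul, map_pow, hr', he, ← hπdef, ← zpow_natCast π (-m).toNat, ht,
        mul_comm (π ^ m), mul_assoc, ← zpow_add₀ hπ0]
      simp
    have heq : r' * ϖ ^ (-m).toNat = (u : R) := inj this
    have hd : ϖ ∣ (u : R) := by
      rw [← heq]
      have : 0 < (-m).toNat := by omega
      exact Dvd.dvd.mul_left (dvd_pow_self ϖ this.ne') r'
    exact hϖ.not_isUnit (isUnit_of_dvd_unit hd u.isUnit)
  · right
    have : algebraMap R K r' = algebraMap R K (u : R) := by
      rw [hr', he, hm]
      simp
    have heq : r' = (u : R) := inj this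
    refine ⟨Units.map (IsLocalRing.residue R).toMonoidHom u, ?_, hc⟩
    rw [heq]
    simp [Units.coe_map]
  · left
    have ht : (m.toNat : ℤ) = m := Int.toNat_of_nonneg hm.le
    have : algebraMap R K r' = algebraMap R K (ϖ ^ m.toNat * (u : R)) := by
      rw [hr', he, map_mul, map_pow, ← hπdef, ← zpow_natCast π m.toNat, ht]
    have heq : r' = ϖ ^ m.toNat * (u : R) := inj this
    rw [heq, map_mul, map_pow, hresϖ]
    have : 0 < m.toNat := by omega
    rw [zero_pow this.ne']
    ring
end

section
/- Let (R, m, κ) be a DVR containing a field k with fraction field K and valuation v. Let φ = ⟨a₁,...,aₙ⟩ be a diagonal quadratic form over k whose reduction to κ is anisotropic, and let D(φ_K) ⊆ K* be the set of values represented by φ over K. Then every element h of D(φ_K) can be written as h = u·t^{2j} where u is a unit of R, t is a uniformizer of R, and j ∈ ℤ; i.e., v(h) is even for every h ∈ D(φ_K). -/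
/-- Any nonzero element of the fraction field of a DVR is a unit times an integer
power of a given irreducible. -/
lemma aux_unit_zpow (R : Type*) [CommRing R] [IsDomain R] [IsDiscreteValuationRing R]
    (K : Type*) [Field K] [Algebra R K] [IsFractionRing R K]
    {t : R} (ht : Irreducible t) {x : K} (hx : x ≠ 0) :
    ∃ (ε : Rˣ) (m : ℤ), x = algebraMap R K (ε : R) * (algebraMap R K t) ^ m := by
  obtain ⟨p, q, hq, rfl⟩ := IsFractionRing.div_surjective (A := R) x
  have hinj : Function.Injective (algebraMap R K) := IsFractionRing.injective R K
  have hqK : algebraMap R K q ≠ 0 := by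
    intro h0
    rw [h0, div_zero] at hx; exact hx rfl
  have hq0 : q ≠ 0 := fun h0 => hqK (by rw [h0, map_zero])
  have hp0 : p ≠ 0 := by
    intro h0
    rw [h0, map_zero, zero_div] at hx; exact hx rfl
  obtain ⟨n₁, u₁, rfl⟩ := IsDiscreteValuationRing.eq_unit_mul_pow_irreducible hp0 ht
  obtain ⟨n₂, u₂, rfl⟩ := IsDiscreteValuationRing.eq_unit_mul_pow_irreducible hq0 ht
  have htK : algebraMap R K t ≠ 0 := fun h0 => ht.ne_zero (hinj (by rw [h0, map_zero]))
  have hu₂K : algebraMap R K (u₂ : R) ≠ 0 := fun h0 => u₂.ne_zero (hinj (by rw [h0, map_zero]))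
  refine ⟨u₁ * u₂⁻¹, (n₁ : ℤ) - (n₂ : ℤ), ?_⟩
  have hBinv : algebraMap R K ((u₂⁻¹ : Rˣ) : R) = (algebraMap R K (u₂ : R))⁻¹ :=
    eq_inv_of_mul_eq_one_left (by rw [← map_mul, Units.inv_mul, map_one])
  rw [map_mul, map_pow, map_mul, map_pow, Units.val_mul, map_mul, hBinv,
    zpow_sub₀ htK, zpow_natCast, zpow_natCast]
  field_simp

/-- If the reduction of `φ = ⟨a₁,…,aₙ⟩` to the residue field is anisotropic,
then every nonzero value `h` represented by `φ` over `K` has even valuation; indeed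
`h = u · t^(2j)` for any uniformizer `t`, with `u ∈ Rˣ` and `j ∈ ℤ`. -/
theorem stmt_3 (R : Type*) [CommRing R] [IsDomain R] [IsDiscreteValuationRing R]
    (k : Type*) [Field k] [Algebra k R]
    (K : Type*) [Field K] [Algebra R K] [IsFractionRing R K]
    (v : K → ℤ)
    (hv0 : v 0 = 0)
    (hvmul : ∀ x y : K, x ≠ 0 → y ≠ 0 → v (x * y) = v x + v y)
    (hvadd : ∀ x y : K, x ≠ 0 → y ≠ 0 → x + y ≠ 0 → min (v x) (v y) ≤ v (x + y))
    (hvint : ∀ x : K, x ≠ 0 → (0 ≤ v x ↔ ∃ r : R, algebraMap R K r = x))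
    (hvres : ∀ r : R, r ≠ 0 →
      (0 < v (algebraMap R K r) ↔ IsLocalRing.residue R r = 0))
    {n : ℕ} (a : Fin n → k) (ha : ∀ i, a i ≠ 0)
    (haniso : ∀ z : Fin n → IsLocalRing.ResidueField R,
      ∑ i, IsLocalRing.residue R (algebraMap k R (a i)) * z i ^ 2 = 0 → z = 0)
    (h : K) (hne : h ≠ 0)
    (hrep : ∃ y : Fin n → K, ∑ i, algebraMap R K (algebraMap k R (a i)) * y i ^ 2 = h) :
    Even (v h) ∧
    ∀ t : R, Irreducible t → ∃ (u : Rˣ) (j : ℤ),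
      h = algebraMap R K (u : R) * (algebraMap R K t) ^ (2 * j) := by
  classical
  obtain ⟨y, hy⟩ := hrep
  have hinj : Function.Injective (algebraMap R K) := IsFractionRing.injective R K
  have key : ∀ t : R, Irreducible t → ∃ (u : Rˣ) (j : ℤ),
      h = algebraMap R K (u : R) * (algebraMap R K t) ^ (2 * j) := by
    intro t ht
    set T := algebraMap R K t with hTdef
    have hTne : T ≠ 0 := fun h0 => ht.ne_zero (hinj (by rw [← hTdef, h0, map_zero]))
    -- decompose each nonzero y i
    have hdec : ∀ i, ∃ (ε : Rˣ) (m : ℤ), y i ≠ 0 → y i = algebraMap R K (ε : R) * T ^ m := by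
      intro i
      by_cases hi : y i = 0
      · exact ⟨1, 0, fun h' => absurd hi h'⟩
      · obtain ⟨ε, m, hm⟩ := aux_unit_zpow R K ht hi
        exact ⟨ε, m, fun _ => hm⟩
    choose ε m hεm using hdec
    -- the support of y is nonempty
    set S : Finset (Fin n) := Finset.univ.filter (fun i => y i ≠ 0) with hSdef
    have hS : S.Nonempty := by
      by_contra hS
      rw [Finset.not_nonempty_iff_eq_empty] at hS
      apply hne
      rw [← hy]
      apply Finset.sum_eq_zero
      intro i _
      have : y i = 0 := by
        by_contra hyi
        have : i ∈ S := by simp [hSdef, hyi]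
        simp [hS] at this
      rw [this]; ring
    obtain ⟨i₀, hi₀S, hi₀min⟩ := S.exists_min_image m hS
    set M : ℤ := m i₀ with hMdef
    -- scaled coefficients in R
    set z : Fin n → R := fun i => if y i ≠ 0 then (ε i : R) * t ^ (m i - M).toNat else 0
      with hzdef
    -- per-term identity
    have hterm : ∀ i, algebraMap R K (algebraMap k R (a i)) * y i ^ 2 =
        algebraMap R K (algebraMap k R (a i) * z i ^ 2) * T ^ (2 * M) := by
      intro i
      by_cases hi : y i = 0
      · have hz : z i = 0 := by simp [hzdef, hi]
        rw [hi, hz]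
        simp
      · have hiS : i ∈ S := by simp [hSdef, hi]
        have hMle : M ≤ m i := hi₀min i hiS
        have htoNat : ((m i - M).toNat : ℤ) = m i - M := Int.toNat_of_nonneg (by omega)
        have hz : z i = (ε i : R) * t ^ (m i - M).toNat := by simp [hzdef, hi]
        have hTpow : (T : K) ^ ((m i - M).toNat) = T ^ (m i - M) := by
          rw [← zpow_natCast, htoNat]
        have key2 : (T ^ m i) ^ 2 = (T ^ (m i - M)) ^ 2 * T ^ (2 * M) := by
          rw [← zpow_natCast (T ^ m i) 2, ← zpow_mul, ← zpow_natCast (T ^ (m i - M)) 2,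
            ← zpow_mul, ← zpow_add₀ hTne]
          congr 1
          push_cast
          ring
        rw [hεm i hi, hz, map_mul, map_pow, map_mul, map_pow, ← hTdef, mul_pow, mul_pow,
          hTpow, key2]
        ring
    -- collect the sum
    set s : R := ∑ i, algebraMap k R (a i) * z i ^ 2 with hsdef
    have hsum : h = algebraMap R K s * T ^ (2 * M) := by
      rw [← hy, hsdef, map_sum, Finset.sum_mul]
      exact Finset.sum_congr rfl fun i _ => hterm i
    -- residue of s is nonzero
    have hres : IsLocalRing.residue R s ≠ 0 := by
      intro h0
      have hz0 : (fun i => IsLocalRing.residue R (z i)) = 0 := by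
        apply haniso
        rw [← h0, hsdef, map_sum]
        exact Finset.sum_congr rfl fun i _ => by rw [map_mul, map_pow]
      have hzi₀ : z i₀ = (ε i₀ : R) := by
        have hyi₀ : y i₀ ≠ 0 := by
          have := hi₀S; simp [hSdef] at this; exact this
        simp [hzdef, hyi₀, hMdef]
      have : IsLocalRing.residue R (z i₀) ≠ 0 := by
        rw [hzi₀]
        exact (IsLocalRing.residue_ne_zero_iff_isUnit _).2 (ε i₀).isUnit
      exact this (congrFun hz0 i₀)
    have hsu : IsUnit s := (IsLocalRing.residue_ne_zero_iff_isUnit _).1 hres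
    obtain ⟨u, hu⟩ := hsu
    exact ⟨u, M, by rw [hsum, hu]⟩
  refine ⟨?_, key⟩
  -- even valuation
  obtain ⟨t, ht⟩ := IsDiscreteValuationRing.exists_irreducible R
  obtain ⟨u, j, hj⟩ := key t ht
  have hTne : algebraMap R K t ≠ 0 := fun h0 => ht.ne_zero (hinj (by rw [h0, map_zero]))
  have huK : algebraMap R K (u : R) ≠ 0 := fun h0 => u.ne_zero (hinj (by rw [h0, map_zero]))
  have hvu : v (algebraMap R K (u : R)) = 0 := by
    have h1 : 0 ≤ v (algebraMap R K (u : R)) := (hvint _ huK).2 ⟨u, rfl⟩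
    have h2 : ¬ 0 < v (algebraMap R K (u : R)) := by
      rw [hvres _ u.ne_zero]
      exact (IsLocalRing.residue_ne_zero_iff_isUnit _).2 u.isUnit
    omega
  have hTj : (algebraMap R K t) ^ j ≠ 0 := zpow_ne_zero _ hTne
  have hpow : (algebraMap R K t) ^ (2 * j) =
      (algebraMap R K t) ^ j * (algebraMap R K t) ^ j := by
    rw [← zpow_add₀ hTne]; ring_nf
  rw [hj, hpow, hvmul _ _ huK (mul_ne_zero hTj hTj), hvmul _ _ hTj hTj, hvu]
  exact ⟨v ((algebraMap R K t) ^ j), by ring⟩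
end

section
/- Let k be a field of characteristic 0, φ an anisotropic quadratic form over k, and X the affine quadric x₁x₂ = φ(1, x₃,...,xₙ) in 𝔸ⁿ_k with φ = ⟨1⟩ ⊥ (-φ'). If f : 𝔸¹_k → X is a morphism with coordinate functions f₁,...,fₙ ∈ k[t], then for every closed point P of 𝔸¹_k at which φ remains anisotropic over the residue field κ(P), one has v_P(f₁) = v_P(f₂) = 0. In particular f₁ and f₂ are constants times units at all k-rational points, and f₁(t₀) and f₁(t₁) lie in the same coset of ⟨D(φ_k)⟩ in k* for all t₀, t₁ ∈ k. -/
open Polynomial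

private lemma phi_eval_ne {k : Type*} [Field k] {m : ℕ} {b : Fin m → k}
    (haniso : ∀ (z0 : k) (z : Fin m → k),
      z0 ^ 2 + ∑ i, b i * z i ^ 2 = 0 → z0 = 0 ∧ ∀ i, z i = 0)
    (r : Fin m → Polynomial k) (t : k) :
    Polynomial.eval t (1 + ∑ i, Polynomial.C (b i) * r i ^ 2) ≠ 0 := by
  intro h
  have h' : (1 : k) ^ 2 + ∑ i, b i * (Polynomial.eval t (r i)) ^ 2 = 0 := by
    simpa [eval_finset_sum] using h
  exact one_ne_zero (haniso 1 _ h').1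

private lemma key_lemma {k : Type*} [Field k] {m : ℕ} {b : Fin m → k}
    (haniso : ∀ (z0 : k) (z : Fin m → k),
      z0 ^ 2 + ∑ i, b i * z i ^ 2 = 0 → z0 = 0 ∧ ∀ i, z i = 0)
    (t0 t1 : k) :
    ∀ (n : ℕ) (f1 f2 : Polynomial k) (g : Fin m → Polynomial k),
      f1.natDegree ≤ n → f1 * f2 = 1 + ∑ i, Polynomial.C (b i) * g i ^ 2 →
      ∃ u : kˣ, (u : k) = f1.eval t0 / f1.eval t1 ∧
        u ∈ Subgroup.closure {d : kˣ | ∃ (z0 : k) (z : Fin m → k),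
          z0 ^ 2 + ∑ i, b i * z i ^ 2 = (d : k)} := by
  intro n
  induction n with
  | zero =>
    intro f1 f2 g hdeg heq
    obtain ⟨a, rfl⟩ := natDegree_eq_zero.mp (Nat.le_zero.mp hdeg)
    have ha : a ≠ 0 := by
      intro h
      have := phi_eval_ne haniso g t0
      rw [← heq] at this
      simp [h] at this
    exact ⟨1, by simp [div_self ha], one_mem _⟩
  | succ n ih =>
    intro f1 f2 g hdeg heq
    by_cases h0 : f1.natDegree = 0
    · obtain ⟨a, rfl⟩ := natDegree_eq_zero.mp h0
      have ha : a ≠ 0 := by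
        intro h
        have := phi_eval_ne haniso g t0
        rw [← heq] at this
        simp [h] at this
      exact ⟨1, by simp [div_self ha], one_mem _⟩
    · have hne1 : ∀ t : k, f1.eval t ≠ 0 := by
        intro t h
        have := phi_eval_ne haniso g t
        rw [← heq] at this
        simp [h] at this
      have hf1 : f1 ≠ 0 := by
        intro h
        exact hne1 0 (by simp [h])
      have hcne : f1.leadingCoeff ≠ 0 := leadingCoeff_ne_zero.mpr hf1
      set h1 : Polynomial k := f1 * Polynomial.C f1.leadingCoeff⁻¹ with hh1
      have hmon : h1.Monic := monic_mul_leadingCoeff_inv hf1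
      have hdegh : h1.natDegree = f1.natDegree :=
        natDegree_eq_of_degree_eq (degree_mul_leadingCoeff_inv _ hf1)
      have hne_one : h1 ≠ 1 := by
        intro h
        rw [h, natDegree_one] at hdegh
        exact h0 hdegh.symm
      set r : Fin m → Polynomial k := fun i => g i %ₘ h1 with hr
      have hrdeg : ∀ i, (r i).natDegree < f1.natDegree := by
        intro i
        rw [← hdegh]
        exact natDegree_modByMonic_lt _ hmon hne_one
      have hdvd_gr : ∀ i, f1 ∣ (g i - r i) := by
        intro i
        have h2 : g i - r i = h1 * (g i /ₘ h1) := by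
          have := modByMonic_add_div (g i) h1
          linear_combination -this
        rw [h2, hh1]
        exact Dvd.dvd.mul_right (dvd_mul_right f1 _) _
      set A : Polynomial k := 1 + ∑ i, Polynomial.C (b i) * r i ^ 2 with hA
      have hdvdA : f1 ∣ A := by
        have h2 : f1 ∣ (∑ i, Polynomial.C (b i) * g i ^ 2) -
            (∑ i, Polynomial.C (b i) * r i ^ 2) := by
          rw [← Finset.sum_sub_distrib]
          apply Finset.dvd_sum
          intro i _
          have h3 : Polynomial.C (b i) * g i ^ 2 - Polynomial.C (b i) * r i ^ 2 =
              (g i - r i) * (Polynomial.C (b i) * (g i + r i)) := by ring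
          rw [h3]
          exact (hdvd_gr i).mul_right _
        have h4 : A = f1 * f2 - ((∑ i, Polynomial.C (b i) * g i ^ 2) -
            (∑ i, Polynomial.C (b i) * r i ^ 2)) := by
          rw [heq, hA]; ring
        rw [h4]
        exact dvd_sub (dvd_mul_right _ _) h2
      obtain ⟨f2', hf2'⟩ := hdvdA
      have hAne : ∀ t : k, A.eval t ≠ 0 := fun t => phi_eval_ne haniso r t
      have hf2'ne : ∀ t : k, f2'.eval t ≠ 0 := by
        intro t h
        have := hAne t
        rw [hf2'] at this
        simp [h] at this
      have hf2'0 : f2' ≠ 0 := by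
        intro h
        exact hf2'ne 0 (by simp [h])
      have hAdeg : A.natDegree ≤ 2 * (f1.natDegree - 1) := by
        have hs : (∑ i, Polynomial.C (b i) * r i ^ 2).natDegree ≤ 2 * (f1.natDegree - 1) := by
          apply natDegree_sum_le_of_forall_le
          intro i _
          calc (Polynomial.C (b i) * r i ^ 2).natDegree
              ≤ (r i ^ 2).natDegree := natDegree_C_mul_le _ _
            _ ≤ 2 * (r i).natDegree := natDegree_pow_le
            _ ≤ 2 * (f1.natDegree - 1) := by
                have := hrdeg i
                omega
        calc A.natDegree ≤ max (1 : Polynomial k).natDegree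
              (∑ i, Polynomial.C (b i) * r i ^ 2).natDegree := natDegree_add_le _ _
          _ ≤ 2 * (f1.natDegree - 1) := by simpa using hs
      have hmuldeg : f1.natDegree + f2'.natDegree = A.natDegree := by
        rw [hf2', natDegree_mul hf1 hf2'0]
      have hdeg2 : f2'.natDegree ≤ n := by omega
      obtain ⟨u', hu'val, hu'mem⟩ := ih f2' f1 r hdeg2 (by rw [mul_comm, ← hf2'])
      have hAeval : ∀ t : k, A.eval t = f1.eval t * f2'.eval t := by
        intro t
        rw [hf2', eval_mul]
      refine ⟨Units.mk0 (A.eval t0) (hAne t0) * (Units.mk0 (A.eval t1) (hAne t1))⁻¹ * u'⁻¹,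
        ?_, ?_⟩
      · have e0 := hAeval t0
        have e1 := hAeval t1
        rw [Units.val_mul, Units.val_mul, Units.val_inv_eq_inv_val,
          Units.val_inv_eq_inv_val, hu'val, Units.val_mk0, Units.val_mk0, e0, e1]
        have hx := hf2'ne t0
        have hy := hf2'ne t1
        have ha := hne1 t0
        have hb := hne1 t1
        field_simp
      · refine mul_mem (mul_mem ?_ (inv_mem ?_)) (inv_mem hu'mem)
        · apply Subgroup.subset_closure
          exact ⟨1, fun i => (r i).eval t0, by simp [hA, eval_finset_sum]⟩
        · apply Subgroup.subset_closure
          exact ⟨1, fun i => (r i).eval t1, by simp [hA, eval_finset_sum]⟩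

/-- let `φ = ⟨1, b₃,…,bₙ⟩` be anisotropic over `k` (char 0) and
`f : 𝔸¹ → X` a morphism to the quadric `x₁x₂ = φ(1, x₃,…,xₙ)`, given by polynomials
`f₁, f₂, g₃,…,gₙ` with `f₁f₂ = 1 + ∑ bᵢgᵢ²`. Then at every closed point `P` (monic
irreducible `p`) where `φ` stays anisotropic over the residue field, `v_P(f₁) = v_P(f₂) = 0`
(i.e. `p ∤ f₁` and `p ∤ f₂`); and all values `f₁(t₀)`, `f₁(t₁)` (`t₀, t₁ ∈ k`) are nonzero
and lie in the same coset of `⟨D(φ_k)⟩ ≤ kˣ`. -/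
theorem stmt_9 (k : Type*) [Field k] [CharZero k]
    {m : ℕ} (hm : 1 ≤ m) (b : Fin m → k)
    (haniso : ∀ (z0 : k) (z : Fin m → k),
      z0 ^ 2 + ∑ i, b i * z i ^ 2 = 0 → z0 = 0 ∧ ∀ i, z i = 0)
    (f1 f2 : Polynomial k) (g : Fin m → Polynomial k)
    (heq : f1 * f2 = 1 + ∑ i, Polynomial.C (b i) * g i ^ 2) :
    (∀ p : Polynomial k, p.Monic → Irreducible p →
      (∀ (z0 : Polynomial k ⧸ (Ideal.span {p} : Ideal (Polynomial k)))
         (z : Fin m → Polynomial k ⧸ (Ideal.span {p} : Ideal (Polynomial k))),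
        z0 ^ 2 + ∑ i, Ideal.Quotient.mk (Ideal.span {p}) (Polynomial.C (b i)) * z i ^ 2 = 0 →
        z0 = 0 ∧ ∀ i, z i = 0) →
      ¬ p ∣ f1 ∧ ¬ p ∣ f2) ∧
    (∀ t0 t1 : k, f1.eval t0 ≠ 0 ∧ f1.eval t1 ≠ 0 ∧
      ∃ u : kˣ, (u : k) = f1.eval t0 / f1.eval t1 ∧
        u ∈ Subgroup.closure {d : kˣ | ∃ (z0 : k) (z : Fin m → k),
          z0 ^ 2 + ∑ i, b i * z i ^ 2 = (d : k)}) := by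
  have hne1 : ∀ t : k, f1.eval t ≠ 0 := by
    intro t h
    have := phi_eval_ne haniso g t
    rw [← heq] at this
    simp [h] at this
  constructor
  · intro p hmonic hirr hquot
    have hnt : Nontrivial (Polynomial k ⧸ (Ideal.span {p} : Ideal (Polynomial k))) := by
      apply Ideal.Quotient.nontrivial_iff.mpr
      rw [Ne, Ideal.span_singleton_eq_top]
      exact hirr.not_isUnit
    have key : ¬ p ∣ f1 * f2 := by
      intro hdvd
      have hz : (Ideal.Quotient.mk (Ideal.span {p}) (f1 * f2)) = 0 :=
        Ideal.Quotient.eq_zero_iff_mem.mpr (Ideal.mem_span_singleton.mpr hdvd)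
      rw [heq] at hz
      have hz' : (1 : Polynomial k ⧸ (Ideal.span {p} : Ideal (Polynomial k))) ^ 2 +
          ∑ i, Ideal.Quotient.mk (Ideal.span {p}) (Polynomial.C (b i)) *
            (Ideal.Quotient.mk (Ideal.span {p}) (g i)) ^ 2 = 0 := by
        rw [one_pow]
        rw [map_add, map_one, map_sum] at hz
        simpa [map_mul, map_pow] using hz
      exact one_ne_zero ((hquot 1 (fun i => Ideal.Quotient.mk _ (g i)) hz').1)
    exact ⟨fun h => key (h.mul_right f2), fun h => key (h.mul_left f1)⟩
  · intro t0 t1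
    exact ⟨hne1 t0, hne1 t1,
      key_lemma haniso t0 t1 f1.natDegree f1 f2 g le_rfl heq⟩
end

section
/- Let (R, m, κ) be a DVR with fraction field K and valuation v, and let φ = ⟨1⟩ ⊥ (-φ') be a quadratic form over a field k ⊆ R in n-1 variables such that φ_κ is anisotropic. Suppose h₁,...,hₙ ∈ K satisfy h₁h₂ = φ(1, h₃,...,hₙ). If v(hᵢ) ≥ 0 for all i (i.e., the K-point lifts to an R-point), then v(h₁) = v(h₂) = 0. -/
/-- if `φ = ⟨1, b₃,…,bₙ⟩` has anisotropic reduction over the residue field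
and `h₁h₂ = φ(1, h₃,…,hₙ)` in `K`, with all `hᵢ` lifting to `R` (i.e. `v(hᵢ) ≥ 0`),
then `v(h₁) = v(h₂) = 0`. -/
theorem stmt_10 (R : Type*) [CommRing R] [IsDomain R] [IsDiscreteValuationRing R]
    (k : Type*) [Field k] [Algebra k R]
    (K : Type*) [Field K] [Algebra R K] [IsFractionRing R K]
    (v : K → ℤ)
    (hv0 : v 0 = 0)
    (hvmul : ∀ x y : K, x ≠ 0 → y ≠ 0 → v (x * y) = v x + v y)
    (hvadd : ∀ x y : K, x ≠ 0 → y ≠ 0 → x + y ≠ 0 → min (v x) (v y) ≤ v (x + y))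
    (hvint : ∀ x : K, x ≠ 0 → (0 ≤ v x ↔ ∃ r : R, algebraMap R K r = x))
    (hvres : ∀ r : R, r ≠ 0 →
      (0 < v (algebraMap R K r) ↔ IsLocalRing.residue R r = 0))
    {m : ℕ} (b : Fin m → k)
    (haniso : ∀ (z0 : IsLocalRing.ResidueField R) (z : Fin m → IsLocalRing.ResidueField R),
      z0 ^ 2 + ∑ i, IsLocalRing.residue R (algebraMap k R (b i)) * z i ^ 2 = 0 →
      z0 = 0 ∧ ∀ i, z i = 0)
    (h1 h2 : K) (h : Fin m → K)
    (heq : h1 * h2 = 1 + ∑ i, algebraMap R K (algebraMap k R (b i)) * h i ^ 2)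
    (hlift : 0 ≤ v h1 ∧ 0 ≤ v h2 ∧ ∀ i, 0 ≤ v (h i)) :
    h1 ≠ 0 ∧ h2 ≠ 0 ∧ v h1 = 0 ∧ v h2 = 0 := by
  obtain ⟨hl1, hl2, hl⟩ := hlift
  -- lift each h i to R
  have hex : ∀ i, ∃ r : R, algebraMap R K r = h i := by
    intro i
    by_cases hi : h i = 0
    · exact ⟨0, by simp [hi]⟩
    · exact (hvint _ hi).mp (hl i)
  choose r hr using hex
  set w : R := 1 + ∑ i, (algebraMap k R (b i)) * r i ^ 2 with hw
  have hwK : algebraMap R K w = 1 + ∑ i, algebraMap R K (algebraMap k R (b i)) * h i ^ 2 := by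
    simp only [hw, map_add, map_one, map_sum, map_mul, map_pow, hr]
  -- residue of w is nonzero
  have hresw : IsLocalRing.residue R w ≠ 0 := by
    intro h0
    have hres : (1 : IsLocalRing.ResidueField R) ^ 2 +
        ∑ i, IsLocalRing.residue R (algebraMap k R (b i)) *
          (IsLocalRing.residue R (r i)) ^ 2 = 0 := by
      rw [one_pow]
      simpa only [hw, map_add, map_one, map_sum, map_mul, map_pow] using h0
    exact one_ne_zero (haniso 1 (fun i => IsLocalRing.residue R (r i)) hres).1
  have hwne : w ≠ 0 := by
    intro h0; exact hresw (by rw [h0, map_zero])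
  have hinj : Function.Injective (algebraMap R K) := IsFractionRing.injective R K
  have hprod : h1 * h2 = algebraMap R K w := by rw [hwK, heq]
  have hprodne : h1 * h2 ≠ 0 := by
    rw [hprod]
    exact fun h0 => hwne (hinj (by rwa [map_zero]))
  have hn1 : h1 ≠ 0 := fun h0 => hprodne (by rw [h0, zero_mul])
  have hn2 : h2 ≠ 0 := fun h0 => hprodne (by rw [h0, mul_zero])
  obtain ⟨r1, hr1⟩ := (hvint _ hn1).mp hl1
  obtain ⟨r2, hr2⟩ := (hvint _ hn2).mp hl2
  have hr1ne : r1 ≠ 0 := fun h0 => hn1 (by rw [← hr1, h0, map_zero])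
  have hr2ne : r2 ≠ 0 := fun h0 => hn2 (by rw [← hr2, h0, map_zero])
  have hrw : r1 * r2 = w := by
    apply hinj
    rw [map_mul, hr1, hr2, ← hprod]
  have hres1 : IsLocalRing.residue R r1 ≠ 0 := by
    intro h0
    apply hresw
    rw [← hrw, map_mul, h0, zero_mul]
  have hres2 : IsLocalRing.residue R r2 ≠ 0 := by
    intro h0
    apply hresw
    rw [← hrw, map_mul, h0, mul_zero]
  have hv1 : ¬ 0 < v h1 := by
    intro hlt
    exact hres1 ((hvres r1 hr1ne).mp (by rwa [hr1]))
  have hv2 : ¬ 0 < v h2 := by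
    intro hlt
    exact hres2 ((hvres r2 hr2ne).mp (by rwa [hr2]))
  exact ⟨hn1, hn2, le_antisymm (not_lt.mp hv1) hl1, le_antisymm (not_lt.mp hv2) hl2⟩
end

section
/- Let (R, m, κ) be a DVR with fraction field K and valuation v, and let φ = ⟨1, b₃,...,bₙ⟩ be a quadratic form with coefficients in a field k ⊆ R such that φ_κ is anisotropic. Suppose h₁,...,hₙ ∈ K satisfy h₁h₂ = 1 + Σᵢ₌₃ⁿ bᵢhᵢ², and suppose min{v(h₁), v(h₂)} < 0 or some v(hᵢ) < 0. Then min{v(h₁), v(h₂)} = min{v(h₁), v(h₂), ..., v(hₙ)}. -/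
private lemma sum_val_ge {K : Type*} [Field K] (v : K → ℤ)
    (hvadd : ∀ x y : K, x ≠ 0 → y ≠ 0 → x + y ≠ 0 → min (v x) (v y) ≤ v (x + y))
    {ι : Type*} (s : Finset ι) (f : ι → K) (c : ℤ)
    (hb : ∀ i ∈ s, f i ≠ 0 → c ≤ v (f i)) :
    (∑ i ∈ s, f i) ≠ 0 → c ≤ v (∑ i ∈ s, f i) := by
  induction s using Finset.cons_induction with
  | empty => simp
  | cons a s ha ih =>
    intro hne
    rw [Finset.sum_cons] at hne ⊢
    rcases eq_or_ne (f a) 0 with h0 | h0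
    · rw [h0, zero_add] at hne ⊢
      exact ih (fun i hi => hb i (Finset.mem_cons_of_mem hi)) hne
    rcases eq_or_ne (∑ i ∈ s, f i) 0 with hs0 | hs0
    · rw [hs0, add_zero] at hne ⊢
      exact hb a (Finset.mem_cons_self a s) h0
    · refine le_trans (le_min (hb a (Finset.mem_cons_self a s) h0)
        (ih (fun i hi => hb i (Finset.mem_cons_of_mem hi)) hs0)) (hvadd _ _ h0 hs0 hne)

/-- with `φ = ⟨1, b₃,…,bₙ⟩` of anisotropic reduction and
`h₁h₂ = 1 + ∑ bᵢhᵢ²` in `K`, if the point does not lift to `R` (some valuation is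
negative), then `min{v(h₁), v(h₂)} = min{v(h₁),…,v(hₙ)}`, i.e. `h₁, h₂ ≠ 0` and
`min (v h₁) (v h₂) ≤ v(hᵢ)` for every nonzero `hᵢ`. -/
theorem stmt_11 (R : Type*) [CommRing R] [IsDomain R] [IsDiscreteValuationRing R]
    (k : Type*) [Field k] [Algebra k R]
    (K : Type*) [Field K] [Algebra R K] [IsFractionRing R K]
    (v : K → ℤ)
    (hv0 : v 0 = 0)
    (hvmul : ∀ x y : K, x ≠ 0 → y ≠ 0 → v (x * y) = v x + v y)
    (hvadd : ∀ x y : K, x ≠ 0 → y ≠ 0 → x + y ≠ 0 → min (v x) (v y) ≤ v (x + y))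
    (hvint : ∀ x : K, x ≠ 0 → (0 ≤ v x ↔ ∃ r : R, algebraMap R K r = x))
    (hvres : ∀ r : R, r ≠ 0 →
      (0 < v (algebraMap R K r) ↔ IsLocalRing.residue R r = 0))
    {m : ℕ} (b : Fin m → k)
    (haniso : ∀ (z0 : IsLocalRing.ResidueField R) (z : Fin m → IsLocalRing.ResidueField R),
      z0 ^ 2 + ∑ i, IsLocalRing.residue R (algebraMap k R (b i)) * z i ^ 2 = 0 →
      z0 = 0 ∧ ∀ i, z i = 0)
    (h1 h2 : K) (h : Fin m → K)
    (heq : h1 * h2 = 1 + ∑ i, algebraMap R K (algebraMap k R (b i)) * h i ^ 2)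
    (hnolift : (h1 ≠ 0 ∧ v h1 < 0) ∨ (h2 ≠ 0 ∧ v h2 < 0) ∨ ∃ i, h i ≠ 0 ∧ v (h i) < 0) :
    h1 ≠ 0 ∧ h2 ≠ 0 ∧ min (v h1) (v h2) < 0 ∧
      ∀ i, h i ≠ 0 → min (v h1) (v h2) ≤ v (h i) := by
  classical
  have hinjRK : Function.Injective (algebraMap R K) := IsFractionRing.injective R K
  -- basic valuation facts
  have hv1 : v (1 : K) = 0 := by
    have := hvmul 1 1 one_ne_zero one_ne_zero
    rw [mul_one] at this; omega
  have hvinv : ∀ x : K, x ≠ 0 → v x⁻¹ = - v x := by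
    intro x hx
    have := hvmul x x⁻¹ hx (inv_ne_zero hx)
    rw [mul_inv_cancel₀ hx, hv1] at this; omega
  -- value of the coefficients is zero
  have hvb : ∀ i : Fin m, b i ≠ 0 →
      v (algebraMap R K (algebraMap k R (b i))) = 0 := by
    intro i hbi
    have hRne : algebraMap k R (b i) ≠ 0 := by
      intro h0
      exact hbi ((algebraMap k R).injective (by rw [h0, map_zero]))
    have hKne : algebraMap R K (algebraMap k R (b i)) ≠ 0 := by
      intro h0
      exact hRne (hinjRK (by rw [h0, map_zero]))
    have hge : 0 ≤ v (algebraMap R K (algebraMap k R (b i))) :=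
      (hvint _ hKne).mpr ⟨algebraMap k R (b i), rfl⟩
    have hresne : IsLocalRing.residue R (algebraMap k R (b i)) ≠ 0 := by
      intro h0
      exact hbi (((IsLocalRing.residue R).comp (algebraMap k R)).injective
        (by simpa using h0))
    have := (hvres _ hRne).not.mpr hresne
    omega
  -- μ : the minimum of 0 and the valuations of the nonzero hᵢ
  obtain ⟨μ, hμ0, hμle, hμmem⟩ : ∃ μ : ℤ, μ ≤ 0 ∧ (∀ i, h i ≠ 0 → μ ≤ v (h i)) ∧
      (μ = 0 ∨ ∃ i, h i ≠ 0 ∧ v (h i) = μ) := by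
    refine ⟨(insert 0 ((Finset.univ.filter fun i => h i ≠ 0).image fun i => v (h i))).min'
      ⟨0, Finset.mem_insert_self _ _⟩, Finset.min'_le _ _ (Finset.mem_insert_self _ _),
      fun i hi => Finset.min'_le _ _ (Finset.mem_insert_of_mem (Finset.mem_image.mpr
        ⟨i, Finset.mem_filter.mpr ⟨Finset.mem_univ i, hi⟩, rfl⟩)), ?_⟩
    have hmem := Finset.min'_mem
      (insert 0 ((Finset.univ.filter fun i => h i ≠ 0).image fun i => v (h i)))
      ⟨0, Finset.mem_insert_self _ _⟩
    simp only [Finset.mem_insert, Finset.mem_image, Finset.mem_filter, Finset.mem_univ,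
      true_and] at hmem
    rcases hmem with h0 | ⟨i, hi, hvi⟩
    · exact Or.inl h0
    · exact Or.inr ⟨i, hi, hvi⟩
  -- choose t with v t = -μ
  obtain ⟨t, ht0, htv, htcase⟩ :
      ∃ t : K, t ≠ 0 ∧ v t = -μ ∧
        (t = 1 ∨ ∃ i₀, h i₀ ≠ 0 ∧ v (h i₀) = μ ∧ t = (h i₀)⁻¹) := by
    rcases hμmem with h0 | ⟨i₀, hi₀, hvi₀⟩
    · exact ⟨1, one_ne_zero, by rw [hv1]; omega, Or.inl rfl⟩
    · exact ⟨(h i₀)⁻¹, inv_ne_zero hi₀, by rw [hvinv _ hi₀, hvi₀],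
        Or.inr ⟨i₀, hi₀, hvi₀, rfl⟩⟩
  -- the key claim : v (h1 * h2) ≤ 2 μ and h1 h2 ≠ 0
  have key : h1 * h2 ≠ 0 ∧ v (h1 * h2) ≤ 2 * μ := by
    by_contra hcon
    push_neg at hcon
    -- construct s ∈ R with residue 0 representing t² (h1 h2)
    obtain ⟨s, hsmap, hsres⟩ :
        ∃ s : R, algebraMap R K s = t ^ 2 * (h1 * h2) ∧
          IsLocalRing.residue R s = 0 := by
      rcases eq_or_ne (h1 * h2) 0 with h12 | h12
      · exact ⟨0, by rw [h12, mul_zero, map_zero], map_zero _⟩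
      · have hvlt : 2 * μ < v (h1 * h2) := hcon h12
        have hne : t ^ 2 * (h1 * h2) ≠ 0 := mul_ne_zero (pow_ne_zero _ ht0) h12
        have hvpos : 0 < v (t ^ 2 * (h1 * h2)) := by
          have h2t : v (t ^ 2) = v t + v t := by
            rw [pow_two, hvmul t t ht0 ht0]
          rw [hvmul _ _ (pow_ne_zero _ ht0) h12, h2t, htv]
          omega
        obtain ⟨s, hs⟩ := (hvint _ hne).mp hvpos.le
        have hs0 : s ≠ 0 := by
          rintro rfl
          rw [map_zero] at hs
          exact hne hs.symm
        exact ⟨s, hs, (hvres s hs0).mp (by rw [hs]; exact hvpos)⟩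
    obtain ⟨r0, hr0⟩ : ∃ r0 : R, algebraMap R K r0 = t :=
      (hvint t ht0).mp (by omega)
    have hri : ∀ i, ∃ ri : R, algebraMap R K ri = t * h i := by
      intro i
      rcases eq_or_ne (h i) 0 with h0 | h0
      · exact ⟨0, by rw [h0, mul_zero, map_zero]⟩
      · refine (hvint _ (mul_ne_zero ht0 h0)).mp ?_
        rw [hvmul t _ ht0 h0, htv]
        have := hμle i h0
        omega
    choose r hr using hri
    have hRK : algebraMap R K (r0 ^ 2 + ∑ i, algebraMap k R (b i) * r i ^ 2) =
        algebraMap R K s := by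
      rw [map_add, map_pow, map_sum, hr0, hsmap]
      simp only [map_mul, map_pow, hr]
      rw [heq, mul_add, mul_one, Finset.mul_sum]
      congr 1
      exact Finset.sum_congr rfl fun i _ => by ring
    have hReq : r0 ^ 2 + ∑ i, algebraMap k R (b i) * r i ^ 2 = s := hinjRK hRK
    have hres := congrArg (IsLocalRing.residue R) hReq
    rw [map_add, map_pow, map_sum, hsres] at hres
    simp only [map_mul, map_pow] at hres
    obtain ⟨hz0, hz⟩ := haniso (IsLocalRing.residue R r0)
      (fun i => IsLocalRing.residue R (r i)) hres
    rcases htcase with ht1 | ⟨i₀, hi₀, hvi₀, hti⟩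
    · have hr01 : r0 = 1 := hinjRK (by rw [hr0, ht1, map_one])
      rw [hr01, map_one] at hz0
      exact one_ne_zero hz0
    · have hmap : algebraMap R K (r i₀) = t * h i₀ := hr i₀
      have hne : r i₀ ≠ 0 := by
        intro h0
        rw [h0, map_zero] at hmap
        exact (mul_ne_zero ht0 hi₀) hmap.symm
      have hvz : v (algebraMap R K (r i₀)) = 0 := by
        rw [hmap, hvmul t _ ht0 hi₀, htv, hvi₀]; omega
      have := (hvres (r i₀) hne).mpr (hz i₀)
      omega
  obtain ⟨h12ne, hle⟩ := key
  -- lower bound : 2 μ ≤ v (h1 h2)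
  have hlow : 2 * μ ≤ v (h1 * h2) := by
    rw [heq]
    rcases eq_or_ne (∑ i, algebraMap R K (algebraMap k R (b i)) * h i ^ 2) 0 with
      hs0 | hs0
    · rw [hs0, add_zero, hv1]; omega
    · have hterm : ∀ i ∈ Finset.univ, (fun i =>
          algebraMap R K (algebraMap k R (b i)) * h i ^ 2) i ≠ 0 →
          2 * μ ≤ v ((fun i => algebraMap R K (algebraMap k R (b i)) * h i ^ 2) i) := by
        intro i _ hne
        simp only at hne ⊢
        have hbne : b i ≠ 0 := by
          intro h0
          rw [h0, map_zero, map_zero, zero_mul] at hne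
          exact hne rfl
        have hhne : h i ≠ 0 := by
          intro h0
          rw [h0] at hne
          simp at hne
        have hBne : algebraMap R K (algebraMap k R (b i)) ≠ 0 :=
          fun h0 => hne (by rw [h0, zero_mul])
        have hvpow : v (h i ^ 2) = v (h i) + v (h i) := by
          rw [pow_two, hvmul _ _ hhne hhne]
        rw [hvmul _ _ hBne (pow_ne_zero _ hhne), hvb i hbne, hvpow]
        have := hμle i hhne
        omega
      have hsum := sum_val_ge v hvadd Finset.univ _ (2 * μ) hterm hs0
      have hAne : (1 : K) + ∑ i, algebraMap R K (algebraMap k R (b i)) * h i ^ 2 ≠ 0 := by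
        rw [← heq]; exact h12ne
      have := hvadd 1 _ one_ne_zero hs0 hAne
      rw [hv1] at this
      omega
  have h1ne : h1 ≠ 0 := left_ne_zero_of_mul h12ne
  have h2ne : h2 ≠ 0 := right_ne_zero_of_mul h12ne
  have hvsum : v h1 + v h2 ≤ 2 * μ := by
    rw [← hvmul h1 h2 h1ne h2ne]; exact hle
  refine ⟨h1ne, h2ne, ?_, ?_⟩
  · rcases hnolift with ⟨_, hneg⟩ | ⟨_, hneg⟩ | ⟨i, hine, hneg⟩
    · omega
    · omega
    · have := hμle i hine; omega
  · intro i hi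
    have := hμle i hi
    omega
end
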